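/- Let d ≥ 1 and let P ⊆ ℝ^d be a closed convex cone which is pointed (P ∩ (−P) = {0}), with topological interior Ω, and let a ∈ Ω. Fix k ∈ ℕ and b ∈ Ω with b − k•a ∈ Ω. Set L_k := (Ω + k•a) \ (Ω + (k+1)•a) and L_b := (Ω + b) \ (Ω + a + b). Then for every x ∈ L_k there exists a unique m ∈ ℕ such that x + m•a ∈ L_b. -/

import Mathlib

open Set Pointwise

/-- For a pointed closed convex cone `P ⊆ ℝ^d` (`d ≥ 1`) with interior `Ω`,
`a ∈ Ω`, `k ∈ ℕ` and `b ∈ Ω` with `b - k•a ∈ Ω`: for every `x` in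
`L_k := (Ω + k•a) \ (Ω + (k+1)•a)` there is a unique `m ∈ ℕ` with
`x + m•a ∈ L_b := (Ω + b) \ (Ω + a + b)`. -/
theorem stmt_11 (d : ℕ) (hd : 1 ≤ d) (P : Set (Fin d → ℝ)) (hclosed : IsClosed P)
    (hadd : ∀ x ∈ P, ∀ y ∈ P, x + y ∈ P)
    (hsmul : ∀ (t : ℝ), 0 ≤ t → ∀ x ∈ P, t • x ∈ P)
    (hpointed : P ∩ (-P) = {0})
    (a : Fin d → ℝ) (ha : a ∈ interior P)
    (k : ℕ) (b : Fin d → ℝ) (hb : b ∈ interior P) (hbk : b - k • a ∈ interior P)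
    (Lk Lb : Set (Fin d → ℝ))
    (hLk : Lk = ((fun x => x + k • a) '' interior P) \ ((fun x => x + (k + 1) • a) '' interior P))
    (hLb : Lb = ((fun x => x + b) '' interior P) \ ((fun x => x + (a + b)) '' interior P)) :
    ∀ x ∈ Lk, ∃! m : ℕ, x + m • a ∈ Lb := by
  classical
  have hΩopen : IsOpen (interior P) := isOpen_interior
  have hΩP : interior P ⊆ P := interior_subset
  -- membership in translate images
  have himg : ∀ v y : Fin d → ℝ,
      y ∈ (fun x => x + v) '' interior P ↔ y - v ∈ interior P := by
    intro v y
    constructor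
    · rintro ⟨z, hz, rfl⟩; simpa using hz
    · intro h; exact ⟨y - v, h, by simp⟩
  -- interior + cone ⊆ interior
  have key : ∀ x ∈ interior P, ∀ p ∈ P, x + p ∈ interior P := by
    intro x hx p hp
    have h1 : (fun y => y + p) '' interior P ⊆ P := by
      rintro _ ⟨z, hz, rfl⟩; exact hadd z (hΩP hz) p hp
    have h2 : IsOpen ((fun y => y + p) '' interior P) :=
      (isOpenMap_add_right p) _ hΩopen
    exact interior_maximal h1 h2 ⟨x, hx, rfl⟩
  have hnsmulP : ∀ n : ℕ, (n : ℝ) • a ∈ P := fun n =>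
    hsmul n (by positivity) a (hΩP ha)
  -- a eventually dominates any vector
  have hbig : ∀ v : Fin d → ℝ, ∃ N : ℕ, (N : ℝ) • a - v ∈ P := by
    intro v
    have h1 : Filter.Tendsto (fun n : ℕ => ((n : ℝ))⁻¹ • v) Filter.atTop (nhds 0) := by
      have := (tendsto_inv_atTop_nhds_zero_nat (𝕜 := ℝ)).smul_const v
      simpa using this
    have h0 : Filter.Tendsto (fun n : ℕ => a - ((n : ℝ))⁻¹ • v) Filter.atTop (nhds a) := by
      simpa using (Filter.Tendsto.const_sub a h1)
    obtain ⟨N, hN1, hN2⟩ :=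
      ((h0.eventually (hΩopen.mem_nhds ha)).and (Filter.eventually_ge_atTop 1)).exists
    refine ⟨N, ?_⟩
    have hN0 : (N : ℝ) ≠ 0 := Nat.cast_ne_zero.mpr (by omega)
    have := hsmul N (by positivity) _ (hΩP hN1)
    rwa [smul_sub, smul_smul, mul_inv_cancel₀ hN0, one_smul] at this
  rw [← Nat.cast_smul_eq_nsmul ℝ] at hbk
  intro x hx
  rw [hLk] at hx
  obtain ⟨hx1, hx2⟩ := hx
  rw [himg] at hx1
  rw [himg] at hx2
  rw [← Nat.cast_smul_eq_nsmul ℝ] at hx1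
  rw [← Nat.cast_smul_eq_nsmul ℝ] at hx2
  push_cast at hx2
  -- the predicate
  set Q : ℕ → Prop := fun n => x + (n : ℝ) • a - b ∈ interior P with hQ
  have hmono : ∀ n j : ℕ, Q n → Q (n + j) := by
    intro n j hn
    have : x + ((n : ℝ) + (j : ℝ)) • a - b =
        (x + (n : ℝ) • a - b) + (j : ℝ) • a := by
      rw [add_smul]; abel
    have h := key _ hn _ (hnsmulP j)
    simp only [hQ]
    push_cast
    rw [this]
    exact h
  have hne : ∃ n, Q n := by
    obtain ⟨N, hN⟩ := hbig (b - (k : ℝ) • a)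
    refine ⟨N, ?_⟩
    have : x + (N : ℝ) • a - b = (x - (k : ℝ) • a) + ((N : ℝ) • a - (b - (k : ℝ) • a)) := by
      abel
    rw [hQ]
    simp only []
    rw [this]
    exact key _ hx1 _ hN
  obtain ⟨m, hQm, hmin, hle⟩ :
      ∃ m, Q m ∧ (∀ j < m, ¬ Q j) ∧ ∀ n, Q n → m ≤ n :=
    ⟨Nat.find hne, Nat.find_spec hne, fun j hj => Nat.find_min hne hj,
      fun n hn => Nat.find_le hn⟩
  have hmem : ∀ n : ℕ, (x + n • a ∈ Lb) ↔
      (Q n ∧ x + (n : ℝ) • a - (a + b) ∉ interior P) := by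
    intro n
    rw [hLb, mem_diff, himg, himg, ← Nat.cast_smul_eq_nsmul ℝ]
  refine ⟨m, ?_, ?_⟩
  · show x + m • a ∈ Lb
    rw [hmem]
    refine ⟨hQm, ?_⟩
    intro hcon
    rcases m with _ | j
    · simp only [Nat.cast_zero, zero_smul, add_zero] at hcon
      apply hx2
      have heq : x - ((k : ℝ) + 1) • a = (x - (a + b)) + (b - (k : ℝ) • a) := by
        rw [add_smul, one_smul]; abel
      rw [heq]
      exact key _ hcon _ (hΩP hbk)
    · apply hmin j (Nat.lt_succ_self j)
      push_cast at hcon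
      have heq : x + ((j : ℝ) + 1) • a - (a + b) = x + (j : ℝ) • a - b := by
        rw [add_smul, one_smul]; abel
      rw [heq] at hcon
      exact hcon
  · intro m' hm'
    rw [hmem] at hm'
    obtain ⟨hm'1, hm'2⟩ := hm'
    have hlem : m ≤ m' := hle m' hm'1
    rcases eq_or_lt_of_le hlem with h | h
    · exact h.symm
    · exfalso
      apply hm'2
      obtain ⟨j, rfl⟩ : ∃ j, m' = j + 1 :=
        ⟨m' - 1, (Nat.succ_pred_eq_of_pos (by omega)).symm⟩
      have hQj : Q j := by
        have := hmono m (j - m) hQm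
        rwa [Nat.add_sub_cancel' (by omega : m ≤ j)] at this
      have heq : x + ((j : ℝ) + 1) • a - (a + b) = x + (j : ℝ) • a - b := by
        rw [add_smul, one_smul]; abel
      push_cast
      rw [heq]
      exact hQj
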